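/- For a positive integer n and a partition μ, the evaluation e_n[Ξ_μ] of the elementary symmetric function at the eigenvalues of a permutation matrix with cycle type μ equals the signed sum over all subsets S of {1,...,ℓ(μ)} with Σ_{i∈S} μ_i = n of (-1)^{n+|S|}. -/

import Mathlib

open scoped BigOperators

/-- The list of `r`-th roots of unity for each part `r` of `μ` (eigenvalues of a
permutation matrix of cycle type `μ`), as a list. -/
noncomputable def xiL (μ : List ℕ) : List ℂ :=
  μ.flatMap fun r => (List.range r).map fun k =>
    Complex.exp (2 * Real.pi * Complex.I * k / r)

/-- Evaluation of the elementary symmetric function `e_n` on a list of values. -/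
noncomputable def eEvalL (n : ℕ) (L : List ℂ) : ℂ :=
  ∑ s ∈ Finset.powersetCard n (Finset.univ : Finset (Fin L.length)), ∏ i ∈ s, L.get i


open Polynomial

lemma list_range_map_prod {M : Type*} [CommMonoid M] (f : ℕ → M) (r : ℕ) :
    ((List.range r).map f).prod = ∏ k ∈ Finset.range r, f k := rfl

lemma prod_fin_get {α : Type*} {M : Type*} [CommMonoid M] (K : List α) (g : α → M) :
    ∏ i : Fin K.length, g (K.get i) = (K.map g).prod := by
  conv_rhs => rw [← List.ofFn_get K]
  rw [List.map_ofFn, List.prod_ofFn]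
  rfl

lemma flatMap_map_prod {α β : Type*} {M : Type*} [CommMonoid M] (μ : List α)
    (F : α → List β) (g : β → M) :
    ((μ.flatMap F).map g).prod = (μ.map (fun r => ((F r).map g).prod)).prod := by
  induction μ with
  | nil => simp
  | cons a l ih => simp [List.flatMap_cons, ih]

lemma range_coe_eq (r : ℕ) :
    ((List.range r).flatMap fun a => [(a : ℂ)]) = (List.range r).map (fun k : ℕ => (k : ℂ)) := by
  induction r <;> simp_all [List.range_succ, List.flatMap_append, List.flatMap_singleton']

/-- Product formula for roots of unity, evaluated form. -/
lemma prod_sub_pow_root (r : ℕ) (hr : 0 < r) {η : ℂ} (hη : IsPrimitiveRoot η r) (y : ℂ) :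
    ∏ k ∈ Finset.range r, (y - η ^ k) = y ^ r - 1 := by
  have hP : (Multiset.map (fun a => X - C a) ((X : ℂ[X]) ^ r - C 1).roots).prod
      = (X : ℂ[X]) ^ r - C 1 := by
    apply prod_multiset_X_sub_C_of_monic_of_roots_card_eq
    · exact monic_X_pow_sub_C 1 hr.ne'
    · rw [natDegree_X_pow_sub_C]
      exact hη.card_nthRoots_one
  have hroots : ((X : ℂ[X]) ^ r - C 1).roots = nthRoots r (1 : ℂ) := rfl
  have h1 : nthRoots r (1 : ℂ) = Multiset.map (fun x => η ^ x * 1) (Multiset.range r) :=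
    hη.nthRoots_eq (one_pow r)
  have := congrArg (Polynomial.eval y) hP
  rw [hroots, h1] at this
  simp only [Multiset.map_map, Function.comp, mul_one, eval_multiset_prod, eval_sub, eval_pow,
    eval_X, eval_C, eval_one] at this
  rw [← this]
  rfl

lemma prod_root_mul_add_one (r : ℕ) (hr : 0 < r) {ζ : ℂ} (hζ : IsPrimitiveRoot ζ r) (x : ℂ) :
    ∏ k ∈ Finset.range r, (ζ ^ k * x + 1) = 1 - (-1) ^ r * x ^ r := by
  have hζ0 : ζ ≠ 0 := hζ.ne_zero hr.ne'
  have hsq : ((-1 : ℂ)) ^ r * (-1) ^ r = 1 := by rw [← mul_pow]; norm_num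
  have key : ∀ y : ℂ, ∏ k ∈ Finset.range r, (ζ ^ k * y + 1)
      = (∏ k ∈ Finset.range r, ζ ^ k) * (y ^ r - (-1) ^ r) := by
    intro y
    have h1 : ∀ k, ζ ^ k * y + 1 = ζ ^ k * (y + (ζ⁻¹) ^ k) := by
      intro k
      rw [mul_add, ← mul_pow, mul_inv_cancel₀ hζ0, one_pow]
    have h2 : ∏ k ∈ Finset.range r, (y + (ζ⁻¹) ^ k) = y ^ r - (-1) ^ r := by
      have h3 : ∀ k : ℕ, y + (ζ⁻¹) ^ k = (-1) * ((-y) - (ζ⁻¹) ^ k) := by intro k; ring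
      calc ∏ k ∈ Finset.range r, (y + (ζ⁻¹) ^ k)
          = ∏ k ∈ Finset.range r, ((-1) * ((-y) - (ζ⁻¹) ^ k)) := by
            exact Finset.prod_congr rfl fun k _ => h3 k
        _ = (-1) ^ r * ((-y) ^ r - 1) := by
            rw [Finset.prod_mul_distrib, Finset.prod_const, Finset.card_range,
              prod_sub_pow_root r hr hζ.inv]
        _ = y ^ r - (-1) ^ r := by
            rw [neg_pow y]
            linear_combination y ^ r * hsq
    calc ∏ k ∈ Finset.range r, (ζ ^ k * y + 1)
        = ∏ k ∈ Finset.range r, (ζ ^ k * (y + (ζ⁻¹) ^ k)) :=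
          Finset.prod_congr rfl fun k _ => h1 k
      _ = (∏ k ∈ Finset.range r, ζ ^ k) * ∏ k ∈ Finset.range r, (y + (ζ⁻¹) ^ k) :=
          Finset.prod_mul_distrib
      _ = _ := by rw [h2]
  have h0 := key 0
  simp only [mul_zero, zero_add, Finset.prod_const_one, zero_pow hr.ne', zero_sub] at h0
  rw [key x]
  linear_combination ((-1 : ℂ) ^ r * x ^ r - 1) * h0
    + (-(∏ k ∈ Finset.range r, ζ ^ k) * x ^ r) * hsq

/-- The per-cycle polynomial identity. -/
lemma cycle_poly (r : ℕ) (hr : 0 < r) :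
    ((List.range r).map fun k : ℕ =>
        (C (Complex.exp (2 * Real.pi * Complex.I * k / r)) * X + 1 : ℂ[X])).prod
      = C (-(-1 : ℂ) ^ r) * X ^ r + 1 := by
  set ζ : ℂ := Complex.exp (2 * Real.pi * Complex.I / r) with hζdef
  have hζ : IsPrimitiveRoot ζ r := by
    have h := Complex.isPrimitiveRoot_exp r hr.ne'
    convert h using 2 <;> try ring
  have hexp : ∀ k : ℕ, Complex.exp (2 * Real.pi * Complex.I * k / r) = ζ ^ k := by
    intro k
    rw [hζdef, ← Complex.exp_nat_mul]
    congr 1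
    ring
  apply Polynomial.funext
  intro x
  rw [list_range_map_prod, eval_prod]
  have := prod_root_mul_add_one r hr hζ x
  calc ∏ k ∈ Finset.range r,
        ((C (Complex.exp (2 * Real.pi * Complex.I * k / r)) * X + 1 : ℂ[X])).eval x
      = ∏ k ∈ Finset.range r, (ζ ^ k * x + 1) := by
        exact Finset.prod_congr rfl fun k _ => by simp [hexp k]
    _ = 1 - (-1) ^ r * x ^ r := this
    _ = (C (-(-1 : ℂ) ^ r) * X ^ r + 1 : ℂ[X]).eval x := by simp; ring

/-- Coefficient extraction for products of `C a * X ^ d + 1`. -/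
lemma coeff_prod_add (m : ℕ) (a : Fin m → ℂ) (d : Fin m → ℕ) (n : ℕ) :
    (∏ i : Fin m, (C (a i) * X ^ (d i) + 1)).coeff n
      = ∑ S ∈ Finset.univ.powerset.filter (fun S : Finset (Fin m) => ∑ i ∈ S, d i = n),
          ∏ i ∈ S, a i := by
  classical
  rw [Finset.prod_add]
  have hterm : ∀ S : Finset (Fin m),
      (∏ i ∈ S, (C (a i) * X ^ (d i))) * ∏ i ∈ Finset.univ \ S, (1 : ℂ[X])
        = C (∏ i ∈ S, a i) * X ^ (∑ i ∈ S, d i) := by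
    intro S
    rw [Finset.prod_const_one, mul_one, Finset.prod_mul_distrib, map_prod,
      Finset.prod_pow_eq_pow_sum]
  rw [Finset.sum_congr rfl fun S _ => hterm S, finset_sum_coeff]
  rw [Finset.sum_filter]
  apply Finset.sum_congr rfl
  intro S _
  rw [coeff_C_mul, coeff_X_pow]
  by_cases h : (∑ i ∈ S, d i) = n
  · simp [h]
  · simp [h, Ne.symm h]

/-- `e_n[Ξ_μ]` equals the signed sum over all subsets `S ⊆ {1,…,ℓ(μ)}` with
`∑_{i ∈ S} μ_i = n` of `(-1)^{n + |S|}`. -/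
theorem eEval_at_cycle_type (n : ℕ) (hn : 0 < n) (μ : List ℕ)
    (hpos : ∀ i ∈ μ, 0 < i) (hsort : μ.Pairwise (· ≥ ·)) :
    eEvalL n (xiL μ) =
      ∑ S ∈ Finset.univ.filter (fun S : Finset (Fin μ.length) => (∑ i ∈ S, μ.get i) = n),
        (-1 : ℂ) ^ (n + S.card) := by
  classical
  set L := xiL μ with hL
  -- Step A: eEvalL as coefficient
  have stepA : eEvalL n L = (∏ i : Fin L.length, (C (L.get i) * X ^ 1 + 1)).coeff n := by
    rw [coeff_prod_add, eEvalL, Finset.powersetCard_eq_filter]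
    apply Finset.sum_congr
    · apply Finset.filter_congr
      intro S _
      simp
    · intro S _; rfl
  -- Step B: the polynomial identity
  have stepB : (∏ i : Fin L.length, (C (L.get i) * X ^ 1 + 1))
      = ∏ i : Fin μ.length, (C (-(-1 : ℂ) ^ (μ.get i)) * X ^ (μ.get i) + 1) := by
    rw [prod_fin_get L (fun x => C x * X ^ 1 + 1),
      prod_fin_get μ (fun r => (C (-(-1 : ℂ) ^ r) * X ^ r + 1 : ℂ[X])), hL]
    unfold xiL
    rw [flatMap_map_prod]
    congr 1
    apply List.map_congr_left
    intro r hrμ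
    rw [show (do let a ← List.range r; pure ((a : ℕ) : ℂ))
        = (List.range r).flatMap fun a => [((a : ℕ) : ℂ)] from rfl]
    rw [show ∀ m : ℕ, (List.range m).flatMap (fun a => [((a:ℕ):ℂ)]) = (List.range m).map (fun k : ℕ => (k:ℂ)) from
      fun m => by induction m <;> simp_all [List.range_succ, List.flatMap_append], List.map_map, List.map_map]
    simpa [Function.comp_def, pow_one] using cycle_poly r (hpos r hrμ)
  -- Step C: coefficient of RHS
  rw [stepA, stepB, coeff_prod_add, Finset.powerset_univ]
  apply Finset.sum_congr rfl
  intro S hS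
  rw [Finset.mem_filter] at hS
  have hsum : ∑ i ∈ S, μ.get i = n := hS.2
  calc ∏ i ∈ S, (-(-1 : ℂ) ^ (μ.get i))
      = (-1 : ℂ) ^ S.card * ∏ i ∈ S, (-1 : ℂ) ^ (μ.get i) := by
        rw [← Finset.prod_const, ← Finset.prod_mul_distrib]
        exact Finset.prod_congr rfl fun i _ => by ring
    _ = (-1 : ℂ) ^ S.card * (-1 : ℂ) ^ n := by
        rw [Finset.prod_pow_eq_pow_sum, hsum]
    _ = (-1 : ℂ) ^ (n + S.card) := by rw [pow_add, mul_comm]
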